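/- Let K be a positive integer, Ω and Γ finite sets, X a flat distribution on Ω with min-entropy log₂ K (i.e., X is uniform on a support of size K), and f : Ω → Γ an arbitrary map. Then: (1) if the push-forward distribution f(X) is ε-close to some distribution on Γ with min-entropy at least log₂ K, there exists a set T ⊆ Γ of size at least (1−2ε)·K such that for every y ∈ T and all x, x' in the support of X, f(x) = y and f(x') = y imply x = x'; and (2) if |Γ| ≥ K and the support of f(X) has size at least (1−ε)·K, then f(X) is ε-close to some distribution on Γ with min-entropy log₂ K. -/

import Mathlib

noncomputable def statDist {Ω : Type*} [Fintype Ω] (p q : Ω → ℝ) : ℝ :=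
  (∑ x, |p x - q x|) / 2

def IsDist {Ω : Type*} [Fintype Ω] (p : Ω → ℝ) : Prop :=
  (∀ x, 0 ≤ p x) ∧ (∑ x, p x) = 1

def minEntropyGe {Ω : Type*} [Fintype Ω] (p : Ω → ℝ) (b : ℝ) : Prop :=
  ∀ x, p x ≤ (2 : ℝ) ^ (-b)

noncomputable def pushforward {Ω Γ : Type*} [Fintype Ω] [DecidableEq Γ]
    (f : Ω → Γ) (p : Ω → ℝ) : Γ → ℝ :=
  fun y => ∑ x, if f x = y then p x else 0

theorem stmt0 {Ω Γ : Type*} [Fintype Ω] [Fintype Γ] [DecidableEq Ω] [DecidableEq Γ]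
    (K : ℕ) (hK : 0 < K) (A : Finset Ω) (hA : A.card = K)
    (p : Ω → ℝ) (hp : ∀ x, p x = if x ∈ A then (K : ℝ)⁻¹ else 0)
    (f : Ω → Γ) (ε : ℝ) :
    ((∃ q : Γ → ℝ, IsDist q ∧ minEntropyGe q (Real.logb 2 K) ∧
        statDist (pushforward f p) q ≤ ε) →
      ∃ T : Finset Γ, (1 - 2 * ε) * K ≤ (T.card : ℝ) ∧
        ∀ y ∈ T, ∀ x ∈ A, ∀ x' ∈ A, f x = y → f x' = y → x = x') ∧
    (K ≤ Fintype.card Γ → (1 - ε) * K ≤ ((A.image f).card : ℝ) →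
      ∃ q : Γ → ℝ, IsDist q ∧ minEntropyGe q (Real.logb 2 K) ∧
        statDist (pushforward f p) q ≤ ε) := by
  classical
  have hKpos : (0:ℝ) < K := by exact_mod_cast hK
  have hpow : (2 : ℝ) ^ (-Real.logb 2 (K:ℝ)) = (K : ℝ)⁻¹ := by
    rw [Real.rpow_neg (by norm_num), Real.rpow_logb (by norm_num) (by norm_num) hKpos]
  set c : Γ → ℕ := fun y => (A.filter (fun x => f x = y)).card with hc
  have hpush : ∀ y, pushforward f p y = (c y : ℝ) / K := by
    intro y
    unfold pushforward
    have h1 : ∀ x, (if f x = y then p x else 0)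
        = (if x ∈ A.filter (fun x => f x = y) then (K:ℝ)⁻¹ else 0) := by
      intro x
      rw [hp]
      by_cases h1 : f x = y <;> by_cases h2 : x ∈ A <;> simp [h1, h2]
    rw [Finset.sum_congr rfl (fun x _ => h1 x), Finset.sum_ite_mem, Finset.univ_inter,
      Finset.sum_const, nsmul_eq_mul]
    ring
  have hcsum : ∑ y, c y = K := by
    rw [← hA, Finset.card_eq_sum_card_fiberwise (fun x _ => Finset.mem_univ (f x))]
  constructor
  · rintro ⟨q, ⟨hq0, hq1⟩, hqme, hsd⟩
    have hqle : ∀ y, q y ≤ (K:ℝ)⁻¹ := by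
      intro y; have := hqme y; rwa [hpow] at this
    have hΓK : (K:ℝ) ≤ Fintype.card Γ := by
      have h1 : (1:ℝ) ≤ (Fintype.card Γ : ℝ) * (K:ℝ)⁻¹ := by
        rw [← hq1]
        calc ∑ y, q y ≤ ∑ _y : Γ, (K:ℝ)⁻¹ := Finset.sum_le_sum (fun y _ => hqle y)
          _ = (Fintype.card Γ : ℝ) * (K:ℝ)⁻¹ := by
            rw [Finset.sum_const, nsmul_eq_mul, Finset.card_univ]
      have := mul_le_mul_of_nonneg_right h1 hKpos.le
      rw [one_mul, mul_assoc, inv_mul_cancel₀ hKpos.ne', mul_one] at this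
      exact this
    set Bad := Finset.univ.filter (fun y => 2 ≤ c y) with hBad
    set T := Finset.univ.filter (fun y => ¬ 2 ≤ c y) with hT
    refine ⟨T, ?_, ?_⟩
    · have hbd : (Bad.card : ℝ) * (K:ℝ)⁻¹ ≤ 2 * ε := by
        have hpt : ∀ y ∈ Bad, (K:ℝ)⁻¹ ≤ |pushforward f p y - q y| := by
          intro y hy
          rw [hBad, Finset.mem_filter] at hy
          have h2 : (2:ℝ) ≤ (c y : ℝ) := by exact_mod_cast hy.2
          have : (K:ℝ)⁻¹ ≤ pushforward f p y - q y := by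
            rw [hpush]
            have := hqle y
            rw [div_eq_mul_inv]
            have hKi : (0:ℝ) < (K:ℝ)⁻¹ := inv_pos.mpr hKpos
            nlinarith
          exact this.trans (le_abs_self _)
        calc (Bad.card : ℝ) * (K:ℝ)⁻¹ = ∑ _y ∈ Bad, (K:ℝ)⁻¹ := by
              rw [Finset.sum_const, nsmul_eq_mul]
          _ ≤ ∑ y ∈ Bad, |pushforward f p y - q y| := Finset.sum_le_sum hpt
          _ ≤ ∑ y, |pushforward f p y - q y| :=
              Finset.sum_le_sum_of_subset_of_nonneg (Finset.subset_univ _)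
                (fun y _ _ => abs_nonneg _)
          _ ≤ 2 * ε := by
              have : statDist (pushforward f p) q ≤ ε := hsd
              unfold statDist at this
              linarith
      have hcard : T.card + Bad.card = Fintype.card Γ := by
        rw [hT, hBad, ← Finset.card_univ]
        rw [add_comm]
        exact Finset.card_filter_add_card_filter_not _
      have hbadK : (Bad.card : ℝ) ≤ 2 * ε * K := by
        have := mul_le_mul_of_nonneg_right hbd hKpos.le
        rwa [mul_assoc, inv_mul_cancel₀ hKpos.ne', mul_one] at this
      have hTr : (T.card : ℝ) = (Fintype.card Γ : ℝ) - Bad.card := by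
        have : ((T.card + Bad.card : ℕ) : ℝ) = (Fintype.card Γ : ℝ) := by
          exact_mod_cast congrArg (Nat.cast : ℕ → ℝ) hcard
        push_cast at this
        linarith
      rw [hTr]; nlinarith
    · intro y hy x hx x' hx' hfx hfx'
      rw [hT, Finset.mem_filter] at hy
      have h1 : c y ≤ 1 := by omega
      have := Finset.card_le_one.mp h1
      exact this x (Finset.mem_filter.mpr ⟨hx, hfx⟩) x' (Finset.mem_filter.mpr ⟨hx', hfx'⟩)
  · intro hΓ hS
    set S := A.image f with hSdef
    have hc1 : ∀ y ∈ S, 1 ≤ c y := by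
      intro y hy
      rw [hSdef, Finset.mem_image] at hy
      obtain ⟨x, hx, hfx⟩ := hy
      have : x ∈ A.filter (fun x => f x = y) := Finset.mem_filter.mpr ⟨hx, hfx⟩
      exact Finset.card_pos.mpr ⟨x, this⟩
    have hc0 : ∀ y, y ∉ S → c y = 0 := by
      intro y hy
      rw [hc]
      rw [Finset.card_eq_zero, Finset.filter_eq_empty_iff]
      intro x hx hfx
      exact hy (Finset.mem_image.mpr ⟨x, hx, hfx⟩)
    have hScard : S.card ≤ K := by
      have : S.card ≤ ∑ y ∈ S, c y := by
        calc S.card = ∑ _y ∈ S, 1 := by simp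
          _ ≤ ∑ y ∈ S, c y := Finset.sum_le_sum hc1
      calc S.card ≤ ∑ y ∈ S, c y := this
        _ ≤ ∑ y, c y := Finset.sum_le_sum_of_subset (Finset.subset_univ _)
        _ = K := hcsum
    obtain ⟨B, hSB, _, hBcard⟩ := Finset.exists_subsuperset_card_eq (Finset.subset_univ S)
      hScard (by simpa [Finset.card_univ] using hΓ)
    refine ⟨fun y => if y ∈ B then (K:ℝ)⁻¹ else 0, ⟨fun y => by positivity, ?_⟩, ?_, ?_⟩
    · rw [Finset.sum_ite_mem, Finset.univ_inter, Finset.sum_const, nsmul_eq_mul, hBcard,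
        mul_inv_cancel₀ hKpos.ne']
    · intro y
      rw [hpow]
      dsimp only
      split_ifs
      · exact le_refl _
      · positivity
    · unfold statDist
      have hsplit : ∑ y, |pushforward f p y - (if y ∈ B then (K:ℝ)⁻¹ else 0)|
          = ∑ y ∈ B, |pushforward f p y - (K:ℝ)⁻¹| := by
        rw [← Finset.sum_filter_add_sum_filter_not Finset.univ (fun y => y ∈ B)]
        have h1 : Finset.univ.filter (fun y => y ∈ B) = B := by ext y; simp
        have h2 : ∑ y ∈ Finset.univ.filter (fun y => ¬ y ∈ B),
            |pushforward f p y - (if y ∈ B then (K:ℝ)⁻¹ else 0)| = 0 := by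
          apply Finset.sum_eq_zero
          intro y hy
          rw [Finset.mem_filter] at hy
          have hyB := hy.2
          have : c y = 0 := hc0 y (fun h => hyB (hSB h))
          rw [hpush, this, if_neg hyB]
          simp
        rw [h2, add_zero, h1]
        apply Finset.sum_congr rfl
        intro y hy
        rw [if_pos hy]
      rw [hsplit]
      have hB2 : ∑ y ∈ B, |pushforward f p y - (K:ℝ)⁻¹|
          = ∑ y ∈ B \ S, (K:ℝ)⁻¹ + ∑ y ∈ S, ((c y : ℝ) / K - (K:ℝ)⁻¹) := by
        rw [← Finset.sum_sdiff hSB]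
        congr 1
        · apply Finset.sum_congr rfl
          intro y hy
          rw [Finset.mem_sdiff] at hy
          rw [hpush, hc0 y hy.2]
          simp [abs_of_nonneg, inv_nonneg.mpr hKpos.le]
        · apply Finset.sum_congr rfl
          intro y hy
          rw [hpush]
          have h1 : (1:ℝ) ≤ (c y : ℝ) := by exact_mod_cast hc1 y hy
          rw [abs_of_nonneg]
          rw [div_eq_mul_inv]
          have hKi : (0:ℝ) < (K:ℝ)⁻¹ := inv_pos.mpr hKpos
          nlinarith
      have hsumS : ∑ y ∈ S, (c y : ℝ) = K := by
        have h := Finset.sum_subset (f := fun y => (c y : ℝ)) (Finset.subset_univ S)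
          (fun y _ hy => by rw [hc0 y hy]; norm_num)
        rw [h]
        exact_mod_cast hcsum
      have hcdS : ((B \ S).card : ℝ) = (K : ℝ) - S.card := by
        rw [Finset.card_sdiff_of_subset hSB, hBcard]
        have := hScard
        push_cast [Nat.cast_sub hScard]
        ring
      rw [hB2, Finset.sum_sub_distrib, Finset.sum_const, Finset.sum_const, nsmul_eq_mul,
        nsmul_eq_mul, hcdS]
      have hsumS' : ∑ y ∈ S, (c y : ℝ) / K = 1 := by
        rw [← Finset.sum_div, hsumS, div_self hKpos.ne']
      rw [hsumS']
      have hSK : (1 - ε) * K ≤ (S.card : ℝ) := hS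
      have hKi : (0:ℝ) < (K:ℝ)⁻¹ := inv_pos.mpr hKpos
      have hid : (K:ℝ) * (K:ℝ)⁻¹ = 1 := mul_inv_cancel₀ hKpos.ne'
      nlinarith
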